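/- Let x* ∈ X be an optimal solution of min{ f(x) : g_k(x) ≤ 0 ∀k, x ∈ X }. Then for every iteration t ≥ 0 of the algorithm, with Δ(t) = (1/2)(‖Q(t+1)‖² − ‖Q(t)‖²), one has Δ(t) + f(x(t)) ≤ f(x*) + (1/(2γ))(‖x* − x(t−1)‖² − ‖x* − x(t)‖²) + (1/2)(‖g(x(t))‖² − ‖g(x(t−1))‖²) + (1/2)(β² + L_f + ‖Q(t)‖·‖L_g‖ + C·‖L_g‖ − 1/γ)·‖x(t) − x(t−1)‖². -/

import Mathlib

/-- The stacked constraint vector `g(x) = (g_1(x), …, g_m(x))` as an element of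
Euclidean space `ℝ^m`. -/
noncomputable def gvec {n m : ℕ} (g : Fin m → EuclideanSpace ℝ (Fin n) → ℝ)
    (x : EuclideanSpace ℝ (Fin n)) : EuclideanSpace ℝ (Fin m) :=
  WithLp.toLp 2 (fun k => g k x)


open Filter Set
open scoped RealInnerProductSpace Topology

variable {E : Type*} [NormedAddCommGroup E] [InnerProductSpace ℝ E] [CompleteSpace E]

lemma dpp_line_deriv {f : E → ℝ} {G a v : E} (s : ℝ)
    (h : HasGradientAt f G (a + s • v)) :
    HasDerivAt (fun s : ℝ => f (a + s • v)) ⟪G, v⟫ s := by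
  have h1 : HasDerivAt (fun s : ℝ => a + s • v) v s := by
    simpa using ((hasDerivAt_id s).smul_const v).const_add a
  have h2 := h.hasFDerivAt.comp_hasDerivAt s h1
  simpa [InnerProductSpace.toDual_apply_apply, Function.comp_def] using h2

lemma dpp_mem_seg {X : Set E} (hX : Convex ℝ X) {a b : E} (ha : a ∈ X) (hb : b ∈ X)
    {s : ℝ} (h0 : 0 ≤ s) (h1 : s ≤ 1) : a + s • (b - a) ∈ X := by
  have := hX ha hb (by linarith : (0:ℝ) ≤ 1 - s) h0 (by ring)
  convert this using 1
  module

lemma dpp_descent {f : E → ℝ} {G : E → E} (hfd : ∀ z, HasGradientAt f (G z) z)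
    {X : Set E} (hX : Convex ℝ X) {L : ℝ}
    (hLip : ∀ z ∈ X, ∀ w ∈ X, ‖G z - G w‖ ≤ L * ‖z - w‖)
    {a b : E} (ha : a ∈ X) (hb : b ∈ X) :
    f b ≤ f a + ⟪G a, b - a⟫ + L / 2 * ‖b - a‖ ^ 2 := by
  set v := b - a with hv
  set ψ : ℝ → ℝ := fun s => f (a + s • v) - s * ⟪G a, v⟫ - L / 2 * s ^ 2 * ‖v‖ ^ 2 with hψ
  have hderiv : ∀ s : ℝ,
      HasDerivAt ψ (⟪G (a + s • v), v⟫ - ⟪G a, v⟫ - L * s * ‖v‖ ^ 2) s := by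
    intro s
    have h1 := dpp_line_deriv s (hfd (a + s • v))
    have h2 : HasDerivAt (fun s : ℝ => s * ⟪G a, v⟫) ⟪G a, v⟫ s := by
      simpa using (hasDerivAt_id s).mul_const ⟪G a, v⟫
    have h3 : HasDerivAt (fun s : ℝ => L / 2 * s ^ 2 * ‖v‖ ^ 2) (L * s * ‖v‖ ^ 2) s := by
      have := ((hasDerivAt_pow 2 s).const_mul (L / 2)).mul_const (‖v‖ ^ 2)
      exact this.congr_deriv (by push_cast; ring)
    exact (h1.sub h2).sub h3
  have hanti : AntitoneOn ψ (Icc 0 1) := by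
    apply antitoneOn_of_deriv_nonpos (convex_Icc 0 1)
    · exact fun s _ => ((hderiv s).continuousAt).continuousWithinAt
    · exact fun s _ => ((hderiv s).differentiableAt).differentiableWithinAt
    · rw [interior_Icc]
      intro s hs
      rw [(hderiv s).deriv]
      have hsX : a + s • v ∈ X := dpp_mem_seg hX ha hb hs.1.le hs.2.le
      have h4 : ⟪G (a + s • v) - G a, v⟫ ≤ ‖G (a + s • v) - G a‖ * ‖v‖ :=
        real_inner_le_norm _ _
      have h5 : ‖G (a + s • v) - G a‖ ≤ L * ‖a + s • v - a‖ := hLip _ hsX _ ha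
      have h6 : ‖a + s • v - a‖ = s * ‖v‖ := by
        simp [norm_smul, abs_of_pos hs.1]
      have hinner : ⟪G (a + s • v), v⟫ - ⟪G a, v⟫ = ⟪G (a + s • v) - G a, v⟫ :=
        (inner_sub_left _ _ _).symm
      rw [hinner]
      rw [h6] at h5
      have h7 := h4.trans (mul_le_mul_of_nonneg_right h5 (norm_nonneg v))
      nlinarith [h7]
  have key : ψ 1 ≤ ψ 0 :=
    hanti (left_mem_Icc.2 zero_le_one) (right_mem_Icc.2 zero_le_one) zero_le_one
  have e1 : a + (1 : ℝ) • v = b := by rw [hv]; module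
  have e0 : a + (0 : ℝ) • v = a := by module
  simp only [hψ, e1, e0, one_mul, one_pow, zero_mul, mul_zero, sub_zero, zero_pow] at key
  nlinarith [key]

lemma dpp_grad_convex {f : E → ℝ} {G : E → E} {X : Set E} (hf : ConvexOn ℝ X f)
    (hfd : ∀ z, HasGradientAt f (G z) z) {a y : E} (ha : a ∈ X) (hy : y ∈ X) :
    f a + ⟪G a, y - a⟫ ≤ f y := by
  set v := y - a with hv
  have hder : HasDerivAt (fun s : ℝ => f (a + s • v)) ⟪G a, v⟫ 0 := by
    have := dpp_line_deriv (f := f) (a := a) (v := v) 0 (by simpa using hfd a)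
    simpa using this
  have hslope : Tendsto (slope (fun s : ℝ => f (a + s • v)) 0) (𝓝[>] 0) (𝓝 ⟪G a, v⟫) :=
    (hasDerivAt_iff_tendsto_slope.1 hder).mono_left
      (nhdsWithin_mono 0 fun s hs => ne_of_gt hs)
  have hbound : ∀ᶠ s in 𝓝[>] (0 : ℝ),
      slope (fun s : ℝ => f (a + s • v)) 0 s ≤ f y - f a := by
    filter_upwards [Ioo_mem_nhdsGT_of_mem (by norm_num : (0:ℝ) ∈ Ico (0:ℝ) 1)] with s hs
    have hseg : a + s • v = (1 - s) • a + s • y := by rw [hv]; module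
    have h1 : f (a + s • v) ≤ (1 - s) * f a + s * f y := by
      rw [hseg]
      exact hf.2 ha hy (by linarith [hs.2] : (0:ℝ) ≤ 1 - s) hs.1.le (by ring)
    rw [slope_def_field]
    rw [div_le_iff₀ (by linarith [hs.1] : (0:ℝ) < s - 0)]
    have : a + (0:ℝ) • v = a := by module
    rw [this]
    nlinarith [hs.1, h1]
  have := le_of_tendsto hslope hbound
  linarith

lemma dpp_proj_vi {X : Set E} (hX : Convex ℝ X) {u b : E} (hb : b ∈ X)
    (hproj : ∀ y ∈ X, ‖b - u‖ ≤ ‖y - u‖) : ∀ w ∈ X, ⟪u - b, w - b⟫ ≤ 0 := by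
  haveI : Nonempty X := ⟨⟨b, hb⟩⟩
  have hinf : ‖u - b‖ = ⨅ w : X, ‖u - w‖ := by
    apply le_antisymm
    · apply le_ciInf
      intro w
      rw [norm_sub_rev, norm_sub_rev u w]
      exact hproj w w.2
    · have hbdd : BddBelow (Set.range fun w : X => ‖u - (w : E)‖) :=
        ⟨0, by rintro r ⟨w, rfl⟩; exact norm_nonneg _⟩
      exact ciInf_le hbdd ⟨b, hb⟩
  exact (norm_eq_iInf_iff_real_inner_le_zero hX hb).1 hinf

lemma dpp_norm_sq {m : ℕ} (v : EuclideanSpace ℝ (Fin m)) : ‖v‖ ^ 2 = ∑ i, v i ^ 2 := by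
  rw [EuclideanSpace.norm_eq, Real.sq_sqrt (by positivity)]
  simp [sq_abs]

lemma dpp_inner_eq {m : ℕ} (u w : EuclideanSpace ℝ (Fin m)) : ⟪u, w⟫ = ∑ i, u i * w i := by
  simp [PiLp.inner_apply, RCLike.inner_apply, mul_comm]

set_option maxHeartbeats 2000000 in
/-- Drift-plus-penalty bound (Lemma 6 of the paper).  Indexing convention: `x 0`
denotes the initial point `x(−1)` and `x (t+1)` denotes the iterate `x(t)`; thus
at iteration `t` of the paper, `x(t) = x (t+1)`, `x(t−1) = x t`, `Q(t) = Q t`.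
The algorithm: `d t = ∇f(x(t−1)) + Σ_k (Q_k(t) + g_k(x(t−1)))∇g_k(x(t−1))`, and
`x(t)` is the projection of `x(t−1) − γ d(t)` onto `X`. -/
theorem drift_plus_penalty_bound {n m : ℕ}
    (X : Set (EuclideanSpace ℝ (Fin n)))
    (hXne : X.Nonempty) (hXcv : Convex ℝ X) (hXcp : IsCompact X)
    (f : EuclideanSpace ℝ (Fin n) → ℝ)
    (Gf : EuclideanSpace ℝ (Fin n) → EuclideanSpace ℝ (Fin n))
    (g : Fin m → EuclideanSpace ℝ (Fin n) → ℝ)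
    (Gg : Fin m → EuclideanSpace ℝ (Fin n) → EuclideanSpace ℝ (Fin n))
    (Lf : ℝ) (Lg : EuclideanSpace ℝ (Fin m)) (β C : ℝ)
    (hf : ConvexOn ℝ X f)
    (hfd : ∀ z, HasGradientAt f (Gf z) z)
    (hLf : 0 ≤ Lf)
    (hGfLip : ∀ z ∈ X, ∀ w ∈ X, ‖Gf z - Gf w‖ ≤ Lf * ‖z - w‖)
    (hg : ∀ k, ConvexOn ℝ X (g k))
    (hgd : ∀ (k : Fin m) z, HasGradientAt (g k) (Gg k z) z)
    (hLg : ∀ k, 0 ≤ Lg k)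
    (hGgLip : ∀ (k : Fin m), ∀ z ∈ X, ∀ w ∈ X, ‖Gg k z - Gg k w‖ ≤ Lg k * ‖z - w‖)
    (hgLip : ∀ z ∈ X, ∀ w ∈ X, ‖gvec g z - gvec g w‖ ≤ β * ‖z - w‖)
    (hgC : ∀ z ∈ X, ‖gvec g z‖ ≤ C)
    (xstar : EuclideanSpace ℝ (Fin n)) (hxs : xstar ∈ X)
    (hxsFeas : ∀ k, g k xstar ≤ 0)
    (hxsOpt : ∀ z ∈ X, (∀ k, g k z ≤ 0) → f xstar ≤ f z)
    (γ : ℝ) (hγ : 0 < γ)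
    (x : ℕ → EuclideanSpace ℝ (Fin n)) (hxX : ∀ t, x t ∈ X)
    (Q : ℕ → EuclideanSpace ℝ (Fin m))
    (hQ0 : ∀ k, Q 0 k = max 0 (-(g k (x 0))))
    (hQr : ∀ (t : ℕ) (k : Fin m),
      Q (t + 1) k = max (-(g k (x (t + 1)))) (Q t k + g k (x (t + 1))))
    (d : ℕ → EuclideanSpace ℝ (Fin n))
    (hd : ∀ t, d t = Gf (x t) + ∑ k, (Q t k + g k (x t)) • Gg k (x t))
    (hproj : ∀ t, ∀ y ∈ X,
      ‖x (t + 1) - (x t - γ • d t)‖ ≤ ‖y - (x t - γ • d t)‖) :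
    ∀ t : ℕ,
      (1 / 2) * (‖Q (t + 1)‖ ^ 2 - ‖Q t‖ ^ 2) + f (x (t + 1)) ≤
        f xstar + (1 / (2 * γ)) * (‖xstar - x t‖ ^ 2 - ‖xstar - x (t + 1)‖ ^ 2)
          + (1 / 2) * (‖gvec g (x (t + 1))‖ ^ 2 - ‖gvec g (x t)‖ ^ 2)
          + (1 / 2) * (β ^ 2 + Lf + ‖Q t‖ * ‖Lg‖ + C * ‖Lg‖ - 1 / γ)
            * ‖x (t + 1) - x t‖ ^ 2 := by
  have hQg : ∀ (t : ℕ) (k : Fin m), -(g k (x t)) ≤ Q t k := by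
    intro t k
    cases t with
    | zero => rw [hQ0 k]; exact le_max_right _ _
    | succ t => rw [hQr t k]; exact le_max_left _ _
  intro t
  have haX := hxX t
  have hbX := hxX (t + 1)
  rw [norm_sub_rev xstar (x t), norm_sub_rev xstar (x (t + 1))]
  have hS0 : (0 : ℝ) ≤ ‖x (t + 1) - x t‖ ^ 2 := by positivity
  have hVI : ⟪x t - γ • d t - x (t + 1), xstar - x (t + 1)⟫ ≤ 0 :=
    dpp_proj_vi hXcv hbX (fun y hy => hproj t y hy) xstar hxs
  have hVI2 : γ * ⟪d t, x (t + 1) - xstar⟫ ≤ ⟪x t - x (t + 1), x (t + 1) - xstar⟫ := by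
    have expand : x t - γ • d t - x (t + 1) = (x t - x (t + 1)) + (-γ) • d t := by module
    rw [expand, inner_add_left, real_inner_smul_left] at hVI
    have e2 : xstar - x (t + 1) = -(x (t + 1) - xstar) := by module
    rw [e2, inner_neg_right, inner_neg_right] at hVI
    linarith
  have hid : ‖x t - xstar‖ ^ 2 = ‖x (t + 1) - x t‖ ^ 2
      + 2 * ⟪x t - x (t + 1), x (t + 1) - xstar⟫ + ‖x (t + 1) - xstar‖ ^ 2 := by
    rw [show x t - xstar = (x t - x (t + 1)) + (x (t + 1) - xstar) from by module,
      norm_add_sq_real, norm_sub_rev (x t) (x (t + 1))]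
  have K1 : ⟪d t, x (t + 1) - xstar⟫ ≤ 1 / 2 * (1 / γ) *
      (‖x t - xstar‖ ^ 2 - ‖x (t + 1) - xstar‖ ^ 2 - ‖x (t + 1) - x t‖ ^ 2) := by
    have h : γ * ⟪d t, x (t + 1) - xstar⟫ ≤ 1 / 2 *
        (‖x t - xstar‖ ^ 2 - ‖x (t + 1) - xstar‖ ^ 2 - ‖x (t + 1) - x t‖ ^ 2) := by
      linarith [hVI2, hid]
    have h2 := mul_le_mul_of_nonneg_left h (le_of_lt (one_div_pos.2 hγ))
    rw [← mul_assoc, one_div, inv_mul_cancel₀ (ne_of_gt hγ), one_mul] at h2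
    have e3 : γ⁻¹ * (1 / 2 *
        (‖x t - xstar‖ ^ 2 - ‖x (t + 1) - xstar‖ ^ 2 - ‖x (t + 1) - x t‖ ^ 2)) =
        1 / 2 * (1 / γ) *
        (‖x t - xstar‖ ^ 2 - ‖x (t + 1) - xstar‖ ^ 2 - ‖x (t + 1) - x t‖ ^ 2) := by
      ring
    linarith [h2, e3.le, e3.ge]
  have hdinner : ⟪d t, x (t + 1) - xstar⟫ =
      ⟪Gf (x t), x (t + 1) - xstar⟫
        + ∑ k, (Q t k + g k (x t)) * ⟪Gg k (x t), x (t + 1) - xstar⟫ := by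
    rw [hd t, inner_add_left, sum_inner]
    simp only [real_inner_smul_left]
  have hfb : f (x (t + 1)) ≤ f (x t) + ⟪Gf (x t), x (t + 1) - x t⟫
      + Lf / 2 * ‖x (t + 1) - x t‖ ^ 2 :=
    dpp_descent hfd hXcv hGfLip haX hbX
  have hfs : f (x t) + ⟪Gf (x t), xstar - x t⟫ ≤ f xstar := dpp_grad_convex hf hfd haX hxs
  have hf1 : f (x (t + 1)) - f xstar - Lf / 2 * ‖x (t + 1) - x t‖ ^ 2 ≤
      ⟪Gf (x t), x (t + 1) - xstar⟫ := by
    have hsplit : ⟪Gf (x t), x (t + 1) - xstar⟫ =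
        ⟪Gf (x t), x (t + 1) - x t⟫ - ⟪Gf (x t), xstar - x t⟫ := by
      rw [← inner_sub_right]
      congr 1
      module
    rw [hsplit]; linarith
  have hg1 : ∀ k : Fin m,
      (Q t k + g k (x t)) * g k (x (t + 1))
        - ((Q t k + g k (x t)) * Lg k) * (‖x (t + 1) - x t‖ ^ 2 / 2) ≤
        (Q t k + g k (x t)) * ⟪Gg k (x t), x (t + 1) - xstar⟫ := by
    intro k
    have hqk : 0 ≤ Q t k + g k (x t) := by have := hQg t k; linarith
    have hb2 : g k (x (t + 1)) ≤ g k (x t) + ⟪Gg k (x t), x (t + 1) - x t⟫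
        + Lg k / 2 * ‖x (t + 1) - x t‖ ^ 2 :=
      dpp_descent (hgd k) hXcv (hGgLip k) haX hbX
    have hs2 : g k (x t) + ⟪Gg k (x t), xstar - x t⟫ ≤ g k xstar :=
      dpp_grad_convex (hg k) (hgd k) haX hxs
    have hsplit : ⟪Gg k (x t), x (t + 1) - xstar⟫ =
        ⟪Gg k (x t), x (t + 1) - x t⟫ - ⟪Gg k (x t), xstar - x t⟫ := by
      rw [← inner_sub_right]
      congr 1
      module
    have hfeas := hxsFeas k
    have h3 : g k (x (t + 1)) - Lg k / 2 * ‖x (t + 1) - x t‖ ^ 2 ≤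
        ⟪Gg k (x t), x (t + 1) - xstar⟫ := by rw [hsplit]; linarith
    have h4 := mul_le_mul_of_nonneg_left h3 hqk
    nlinarith [h4]
  have hsum : (∑ k, (Q t k + g k (x t)) * g k (x (t + 1))) -
      (∑ k, (Q t k + g k (x t)) * Lg k) * (‖x (t + 1) - x t‖ ^ 2 / 2) ≤
      ∑ k, (Q t k + g k (x t)) * ⟪Gg k (x t), x (t + 1) - xstar⟫ := by
    have h := Finset.sum_le_sum (fun k (_ : k ∈ Finset.univ) => hg1 k)
    rw [Finset.sum_sub_distrib, ← Finset.sum_mul] at h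
    exact h
  have hqLg : ∑ k, (Q t k + g k (x t)) * Lg k ≤ (‖Q t‖ + C) * ‖Lg‖ := by
    have e : ⟪Q t + gvec g (x t), Lg⟫ = ∑ k, (Q t k + g k (x t)) * Lg k := by
      rw [dpp_inner_eq]
      refine Finset.sum_congr rfl fun k _ => ?_
      simp [gvec]
    have h1 := real_inner_le_norm (Q t + gvec g (x t)) Lg
    have h2 : ‖Q t + gvec g (x t)‖ ≤ ‖Q t‖ + ‖gvec g (x t)‖ := norm_add_le _ _
    have h3 := hgC (x t) haX
    have h4 : (0 : ℝ) ≤ ‖Lg‖ := norm_nonneg _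
    nlinarith [e, h1, h2, h3, h4, norm_nonneg (Q t + gvec g (x t))]
  have K5 : (∑ k, (Q t k + g k (x t)) * Lg k) * (‖x (t + 1) - x t‖ ^ 2 / 2) ≤
      ((‖Q t‖ + C) * ‖Lg‖) * (‖x (t + 1) - x t‖ ^ 2 / 2) :=
    mul_le_mul_of_nonneg_right hqLg (by positivity)
  have hdrift : ‖Q (t + 1)‖ ^ 2 - ‖Q t‖ ^ 2 ≤
      2 * ⟪Q t, gvec g (x (t + 1))⟫ + 2 * ‖gvec g (x (t + 1))‖ ^ 2 := by
    have h1 : ∀ k : Fin m, Q (t + 1) k ^ 2 ≤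
        Q t k ^ 2 + (2 * (Q t k * g k (x (t + 1))) + 2 * g k (x (t + 1)) ^ 2) := by
      intro k
      rcases max_choice (-(g k (x (t + 1)))) (Q t k + g k (x (t + 1))) with h | h <;>
        rw [hQr t k, h] <;>
        nlinarith [sq_nonneg (Q t k + g k (x (t + 1))), sq_nonneg (g k (x (t + 1)))]
    have h2 := Finset.sum_le_sum (fun k (_ : k ∈ Finset.univ) => h1 k)
    rw [Finset.sum_add_distrib, Finset.sum_add_distrib, ← Finset.mul_sum,
      ← Finset.mul_sum] at h2
    rw [dpp_norm_sq (Q (t + 1)), dpp_norm_sq (Q t), dpp_norm_sq (gvec g (x (t + 1))),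
      dpp_inner_eq]
    simp only [gvec]
    linarith [h2]
  have hgsum : ∑ k, (Q t k + g k (x t)) * g k (x (t + 1)) =
      ⟪Q t, gvec g (x (t + 1))⟫ + ⟪gvec g (x t), gvec g (x (t + 1))⟫ := by
    rw [dpp_inner_eq, dpp_inner_eq, ← Finset.sum_add_distrib]
    refine Finset.sum_congr rfl fun k _ => ?_
    simp only [gvec]
    ring
  have hgid : ‖gvec g (x t) - gvec g (x (t + 1))‖ ^ 2 =
      ‖gvec g (x t)‖ ^ 2 - 2 * ⟪gvec g (x t), gvec g (x (t + 1))⟫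
        + ‖gvec g (x (t + 1))‖ ^ 2 := by
    rw [norm_sub_sq_real]
  have hglip2 : ‖gvec g (x t) - gvec g (x (t + 1))‖ ^ 2 ≤ β ^ 2 * ‖x (t + 1) - x t‖ ^ 2 := by
    have h := hgLip (x t) haX (x (t + 1)) hbX
    rw [norm_sub_rev (x t) (x (t + 1))] at h
    have h0 : (0 : ℝ) ≤ ‖gvec g (x t) - gvec g (x (t + 1))‖ := norm_nonneg _
    nlinarith [mul_self_le_mul_self h0 h]
  rw [show (1 : ℝ) / (2 * γ) = 1 / 2 * (1 / γ) from by ring]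
  linarith [K1, hdinner, hf1, hsum, K5, hdrift, hgsum, hgid, hglip2]
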